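/- Let M be a matching in a weighted graph such that every edge e of the graph is either in M or is adjacent to some edge e' ∈ M with w(e') ≥ w(e). Then for any matching M*, w(M) ≥ w(M*)/2. -/

import Mathlib

/-- Two edges (as unordered pairs) are adjacent: they share an endpoint. -/
def EdgeAdj {V : Type*} (e e' : Sym2 V) : Prop := ∃ v : V, v ∈ e ∧ v ∈ e'

/-- `M` is a matching in the graph `G`: its members are edges of `G` that are
pairwise vertex-disjoint. -/
def IsMatchingIn {V : Type*} (G : SimpleGraph V) (M : Finset (Sym2 V)) : Prop :=
  (∀ e ∈ M, e ∈ G.edgeSet) ∧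
  (∀ e ∈ M, ∀ e' ∈ M, e ≠ e' → ∀ v : V, v ∈ e → v ∉ e')

/-- if every edge of the graph is either in the matching `M` or adjacent to
an `M`-edge of at least its weight, then for any matching `M*`, `w(M) ≥ w(M*)/2`. -/
theorem maximal_weight_matching_half {V : Type*} [Fintype V] [DecidableEq V]
    (G : SimpleGraph V) (w : Sym2 V → ℝ) (hw : ∀ e, 0 ≤ w e)
    (M : Finset (Sym2 V)) (hM : IsMatchingIn G M)
    (hblock : ∀ e ∈ G.edgeSet, e ∈ M ∨ ∃ e' ∈ M, EdgeAdj e e' ∧ w e ≤ w e') :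
    ∀ Mstar : Finset (Sym2 V), IsMatchingIn G Mstar →
      (∑ e ∈ Mstar, w e) / 2 ≤ ∑ e ∈ M, w e := by
  classical
  intro Mstar hMstar
  have key : ∀ e : Sym2 V, ∃ e', e ∈ Mstar → e' ∈ M ∧ EdgeAdj e e' ∧ w e ≤ w e' := by
    intro e
    by_cases he : e ∈ Mstar
    · rcases hblock e (hMstar.1 e he) with h | ⟨e', h1, h2, h3⟩
      · exact ⟨e, fun _ => ⟨h, ⟨e.out.1, Sym2.out_fst_mem e, Sym2.out_fst_mem e⟩, le_refl _⟩⟩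
      · exact ⟨e', fun _ => ⟨h1, h2, h3⟩⟩
    · exact ⟨e, fun h => absurd h he⟩
  choose f hf using key
  have hmap : ∀ e ∈ Mstar, f e ∈ M := fun e he => (hf e he).1
  have hadj : ∀ e ∈ Mstar, EdgeAdj e (f e) := fun e he => (hf e he).2.1
  have hwle : ∀ e ∈ Mstar, w e ≤ w (f e) := fun e he => (hf e he).2.2
  have hv : ∀ e : Sym2 V, ∃ v, e ∈ Mstar → v ∈ e ∧ v ∈ f e := by
    intro e
    by_cases he : e ∈ Mstar
    · obtain ⟨v, hv1, hv2⟩ := hadj e he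
      exact ⟨v, fun _ => ⟨hv1, hv2⟩⟩
    · exact ⟨e.out.1, fun h => absurd h he⟩
  choose g hg using hv
  have cardbound : ∀ e' ∈ M, (Mstar.filter (fun e => f e = e')).card ≤ 2 := by
    intro e' _
    induction e' using Sym2.ind with
    | _ a b =>
      have hsub : (Mstar.filter (fun e => f e = s(a, b))).card ≤ ({a, b} : Finset V).card := by
        apply Finset.card_le_card_of_injOn g
        · intro e he
          rw [Finset.mem_coe, Finset.mem_filter] at he
          have := (hg e he.1).2
          rw [he.2, Sym2.mem_iff] at this
          simp [this]
        · intro e1 h1 e2 h2 heq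
          rw [Finset.coe_filter] at h1 h2
          by_contra hne
          exact hMstar.2 e1 h1.1 e2 h2.1 hne (g e1) (hg e1 h1.1).1
            (heq ▸ (hg e2 h2.1).1)
      calc (Mstar.filter (fun e => f e = s(a, b))).card ≤ ({a, b} : Finset V).card := hsub
        _ ≤ 2 := le_trans (Finset.card_insert_le _ _) (by simp)
  have main : ∑ e ∈ Mstar, w e ≤ 2 * ∑ e ∈ M, w e := by
    calc ∑ e ∈ Mstar, w e ≤ ∑ e ∈ Mstar, w (f e) := Finset.sum_le_sum hwle
      _ = ∑ e' ∈ M, ∑ e ∈ Mstar.filter (fun e => f e = e'), w (f e) :=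
        (Finset.sum_fiberwise_of_maps_to hmap _).symm
      _ ≤ ∑ e' ∈ M, 2 * w e' := by
        apply Finset.sum_le_sum
        intro e' he'
        have : ∑ e ∈ Mstar.filter (fun e => f e = e'), w (f e)
            = (Mstar.filter (fun e => f e = e')).card * w e' := by
          rw [Finset.sum_congr rfl (fun e he => by
            rw [(Finset.mem_filter.1 he).2]), Finset.sum_const, nsmul_eq_mul]
        rw [this]
        apply mul_le_mul_of_nonneg_right _ (hw e')
        exact_mod_cast cardbound e' he'
      _ = 2 * ∑ e ∈ M, w e := by rw [Finset.mul_sum]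
  linarith
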